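/- Let C be a polyhedral cone in ℝ^d and let L be a linear subspace of ℝ^d. Then C ∩ L is not contained in the lineality space linsp(C) if and only if the relative interior of the dual cone C° has empty intersection with the orthogonal complement L^⊥. -/

import Mathlib

open scoped RealInnerProductSpace BigOperators Pointwise

noncomputable section

/-- The unsigned Stirling numbers of the first kind `⎡n,k⎤`, defined as the coefficients of
the polynomial identity `t (t+1) ⋯ (t+n-1) = ∑ k, ⎡n,k⎤ t^k`. -/
def stirlingFirst (n k : ℕ) : ℕ :=
  (∏ i ∈ Finset.range n, (Polynomial.X + Polynomial.C i : Polynomial ℕ)).coeff k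

/-- The B-analogues `B[n,k]` of the Stirling numbers of the first kind, defined as the
coefficients of `(t+1)(t+3)⋯(t+2n-1) = ∑ k, B[n,k] t^k`. -/
def stirlingFirstB (n k : ℕ) : ℕ :=
  (∏ i ∈ Finset.range n, (Polynomial.X + Polynomial.C (2 * i + 1) : Polynomial ℕ)).coeff k

/-- `D^A(n,d) = 2(⎡n, n-d+1⎤ + ⎡n, n-d+3⎤ + ⋯)`. -/
def DA (n d : ℕ) : ℕ := 2 * ∑ j ∈ Finset.range d, stirlingFirst n (n - d + 1 + 2 * j)

/-- `D^B(n,d) = 2(B[n, n-d+1] + B[n, n-d+3] + ⋯)`. -/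
def DB (n d : ℕ) : ℕ := 2 * ∑ j ∈ Finset.range d, stirlingFirstB n (n - d + 1 + 2 * j)

/-- Stirling numbers of the second kind: the number of partitions of `{1,…,n}` into `k`
non-empty subsets. -/
def stirlingSecond (n k : ℕ) : ℕ :=
  Set.ncard {P : Finset (Finset (Fin n)) |
    P.card = k ∧ (∀ s ∈ P, s.Nonempty) ∧ ∀ i : Fin n, ∃! s, s ∈ P ∧ i ∈ s}

/-- B-analogues of the Stirling numbers of the second kind:
`S_B(n,k) = ∑_{r=k}^n C(n,r) S(r,k) 2^{r-k}`. -/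
def stirlingSecondB (n k : ℕ) : ℕ :=
  ∑ r ∈ Finset.Icc k n, Nat.choose n r * stirlingSecond r k * 2 ^ (r - k)

/-- The `i`-th of the `n-1` difference vectors `y_{σ(i)} - y_{σ(i+1)}` (0-indexed). -/
def diffA (d n : ℕ) (y : Fin n → EuclideanSpace ℝ (Fin d)) (σ : Equiv.Perm (Fin n))
    (i : Fin (n - 1)) : EuclideanSpace ℝ (Fin d) :=
  y (σ ⟨i.val, by have := i.isLt; omega⟩) - y (σ ⟨i.val + 1, by have := i.isLt; omega⟩)

/-- Condition (A1): `n ≥ d+1` and for every permutation `σ`, any `d` of the vectors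
`y_{σ(1)}-y_{σ(2)}, …, y_{σ(n-1)}-y_{σ(n)}` are linearly independent. -/
def CondA1 (d n : ℕ) (y : Fin n → EuclideanSpace ℝ (Fin d)) : Prop :=
  d + 1 ≤ n ∧
    ∀ σ : Equiv.Perm (Fin n), ∀ s : Finset (Fin (n - 1)), s.card = d →
      LinearIndependent ℝ (fun i : s => diffA d n y σ i.1)

/-- A vector of signs `ε ∈ {±1}^n`. -/
def IsSignVec {n : ℕ} (ε : Fin n → ℝ) : Prop := ∀ i, ε i = 1 ∨ ε i = -1

/-- The `i`-th of the `n` vectors `ε_1 y_{σ(1)} - ε_2 y_{σ(2)}, …,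
`ε_{n-1} y_{σ(n-1)} - ε_n y_{σ(n)}, ε_n y_{σ(n)}` (0-indexed). -/
def diffB (d n : ℕ) (y : Fin n → EuclideanSpace ℝ (Fin d)) (ε : Fin n → ℝ)
    (σ : Equiv.Perm (Fin n)) (i : Fin n) : EuclideanSpace ℝ (Fin d) :=
  if h : i.val + 1 < n then
    ε i • y (σ i) - ε ⟨i.val + 1, h⟩ • y (σ ⟨i.val + 1, h⟩)
  else ε i • y (σ i)

/-- Condition (B1): `n ≥ d` and for every sign vector `ε` and permutation `σ`, any `d` of the
vectors `ε_1 y_{σ(1)}-ε_2 y_{σ(2)}, …, ε_{n-1}y_{σ(n-1)}-ε_n y_{σ(n)}, ε_n y_{σ(n)}` are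
linearly independent. -/
def CondB1 (d n : ℕ) (y : Fin n → EuclideanSpace ℝ (Fin d)) : Prop :=
  d ≤ n ∧
    ∀ ε : Fin n → ℝ, IsSignVec ε → ∀ σ : Equiv.Perm (Fin n),
      ∀ s : Finset (Fin n), s.card = d →
        LinearIndependent ℝ (fun i : s => diffB d n y ε σ i.1)

/-- The cone `D^A_σ = {v : ⟨v,y_{σ(1)}⟩ ≤ ⋯ ≤ ⟨v,y_{σ(n)}⟩}`. -/
def ConeA (d n : ℕ) (y : Fin n → EuclideanSpace ℝ (Fin d)) (σ : Equiv.Perm (Fin n)) :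
    Set (EuclideanSpace ℝ (Fin d)) :=
  {v | Monotone fun i : Fin n => (⟪v, y (σ i)⟫)}

/-- The Weyl tessellation of type `A_{n-1}`: all cones `D^A_σ` different from `{0}`. -/
def WeylA (d n : ℕ) (y : Fin n → EuclideanSpace ℝ (Fin d)) :
    Set (Set (EuclideanSpace ℝ (Fin d))) :=
  {C | (∃ σ, C = ConeA d n y σ) ∧ C ≠ {0}}

/-- The cone `D^B_{ε,σ} = {v : ε_1⟨v,y_{σ(1)}⟩ ≤ ⋯ ≤ ε_n⟨v,y_{σ(n)}⟩ ≤ 0}`. -/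
def ConeB (d n : ℕ) (y : Fin n → EuclideanSpace ℝ (Fin d)) (ε : Fin n → ℝ)
    (σ : Equiv.Perm (Fin n)) : Set (EuclideanSpace ℝ (Fin d)) :=
  {v | (Monotone fun i : Fin n => ε i * ⟪v, y (σ i)⟫) ∧
    ∀ i : Fin n, ε i * ⟪v, y (σ i)⟫ ≤ 0}

/-- The Weyl tessellation of type `B_n`: all cones `D^B_{ε,σ}` different from `{0}`. -/
def WeylB (d n : ℕ) (y : Fin n → EuclideanSpace ℝ (Fin d)) :
    Set (Set (EuclideanSpace ℝ (Fin d))) :=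
  {C | (∃ ε σ, IsSignVec ε ∧ C = ConeB d n y ε σ) ∧ C ≠ {0}}

/-- The cone `F^A_σ(l_1,…,l_m)` (with the `l_j` being 1-indexed): within the chain
`⟨v,y_{σ(1)}⟩ ≤ ⋯ ≤ ⟨v,y_{σ(n)}⟩` the inequality at a 1-indexed position `i ∉ {l_1,…,l_m}`
is replaced by an equality. -/
def FaceA (d n : ℕ) (y : Fin n → EuclideanSpace ℝ (Fin d)) (σ : Equiv.Perm (Fin n))
    (m : ℕ) (l : Fin m → ℕ) : Set (EuclideanSpace ℝ (Fin d)) :=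
  {v | (Monotone fun i : Fin n => (⟪v, y (σ i)⟫)) ∧
    ∀ (p : ℕ) (hp : p + 1 < n), (∀ j, l j ≠ p + 1) →
      ⟪v, y (σ ⟨p, by omega⟩)⟫ = ⟪v, y (σ ⟨p + 1, hp⟩)⟫}

/-- Admissible break positions for type `A`: `1 ≤ l_1 < ⋯ < l_m ≤ n-1`. -/
def ValidA (n m : ℕ) (l : Fin m → ℕ) : Prop :=
  StrictMono l ∧ ∀ j, 1 ≤ l j ∧ l j ≤ n - 1

/-- The set `𝓕^A_k(y_1,…,y_n)` of `k`-faces of the Weyl tessellation of type `A_{n-1}`: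
all nonzero cones of the form `F^A_σ(l_1,…,l_{n-d+k-1})`. -/
def FacesA (d n k : ℕ) (y : Fin n → EuclideanSpace ℝ (Fin d)) :
    Set (Set (EuclideanSpace ℝ (Fin d))) :=
  {F | (∃ (σ : Equiv.Perm (Fin n)) (l : Fin (n - d + k - 1) → ℕ),
      ValidA n (n - d + k - 1) l ∧ F = FaceA d n y σ (n - d + k - 1) l) ∧ F ≠ {0}}

/-- The cone `F^B_{ε,σ}(l_1,…,l_m)` (with the `l_j` being 1-indexed): within the chain
`ε_1⟨v,y_{σ(1)}⟩ ≤ ⋯ ≤ ε_n⟨v,y_{σ(n)}⟩ ≤ 0` the inequality at a 1-indexed position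
`i ∉ {l_1,…,l_m}` is replaced by an equality; in particular all `⟨v,y_{σ(i)}⟩` with
`i > l_m` vanish. -/
def FaceB (d n : ℕ) (y : Fin n → EuclideanSpace ℝ (Fin d)) (ε : Fin n → ℝ)
    (σ : Equiv.Perm (Fin n)) (m : ℕ) (l : Fin m → ℕ) : Set (EuclideanSpace ℝ (Fin d)) :=
  {v | (Monotone fun i : Fin n => ε i * ⟪v, y (σ i)⟫) ∧
    (∀ i : Fin n, ε i * ⟪v, y (σ i)⟫ ≤ 0) ∧
    (∀ (p : ℕ) (hp : p + 1 < n), (∀ j, l j ≠ p + 1) →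
      ε ⟨p, by omega⟩ * ⟪v, y (σ ⟨p, by omega⟩)⟫ =
        ε ⟨p + 1, hp⟩ * ⟪v, y (σ ⟨p + 1, hp⟩)⟫) ∧
    (∀ (p : ℕ) (hp : p < n), (∀ j, l j ≤ p) → ⟪v, y (σ ⟨p, hp⟩)⟫ = 0)}

/-- Admissible break positions for type `B`: `1 ≤ l_1 < ⋯ < l_m ≤ n`. -/
def ValidB (n m : ℕ) (l : Fin m → ℕ) : Prop :=
  StrictMono l ∧ ∀ j, 1 ≤ l j ∧ l j ≤ n

/-- The set `𝓕^B_k(y_1,…,y_n)` of `k`-faces of the Weyl tessellation of type `B_n`: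
all nonzero cones of the form `F^B_{ε,σ}(l_1,…,l_{n-d+k})`. -/
def FacesB (d n k : ℕ) (y : Fin n → EuclideanSpace ℝ (Fin d)) :
    Set (Set (EuclideanSpace ℝ (Fin d))) :=
  {F | (∃ (ε : Fin n → ℝ) (σ : Equiv.Perm (Fin n)) (l : Fin (n - d + k) → ℕ),
      IsSignVec ε ∧ ValidB n (n - d + k) l ∧ F = FaceB d n y ε σ (n - d + k) l) ∧ F ≠ {0}}

/-- The multiplicity `l_1!(l_2-l_1)!⋯(l_m-l_{m-1})!(n-l_m)!`. -/
def MultA (n m : ℕ) (l : Fin m → ℕ) : ℕ :=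
  (∏ j : Fin m, Nat.factorial
      (l j - if _ : j.val = 0 then 0 else l ⟨j.val - 1, by have := j.isLt; omega⟩)) *
    (if h : 0 < m then Nat.factorial (n - l ⟨m - 1, by omega⟩) else Nat.factorial n)

/-- The multiplicity `l_1!(l_2-l_1)!⋯(l_m-l_{m-1})!(n-l_m)! 2^{n-l_m}`. -/
def MultB (n m : ℕ) (l : Fin m → ℕ) : ℕ :=
  (∏ j : Fin m, Nat.factorial
      (l j - if _ : j.val = 0 then 0 else l ⟨j.val - 1, by have := j.isLt; omega⟩)) *
    (if h : 0 < m then Nat.factorial (n - l ⟨m - 1, by omega⟩) * 2 ^ (n - l ⟨m - 1, by omega⟩)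
     else Nat.factorial n * 2 ^ n)

/-- The face `C^A_σ(l_1,…,l_m)` of a Weyl chamber of type `A_{n-1}` in `ℝ^n`. -/
def ChamberFaceA (n : ℕ) (σ : Equiv.Perm (Fin n)) (m : ℕ) (l : Fin m → ℕ) :
    Set (EuclideanSpace ℝ (Fin n)) :=
  {β | (Monotone fun i : Fin n => β (σ i)) ∧
    ∀ (p : ℕ) (hp : p + 1 < n), (∀ j, l j ≠ p + 1) → β (σ ⟨p, by omega⟩) = β (σ ⟨p + 1, hp⟩)}

/-- The face `C^B_{ε,σ}(l_1,…,l_m)` of a Weyl chamber of type `B_n` in `ℝ^n`. -/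
def ChamberFaceB (n : ℕ) (ε : Fin n → ℝ) (σ : Equiv.Perm (Fin n)) (m : ℕ) (l : Fin m → ℕ) :
    Set (EuclideanSpace ℝ (Fin n)) :=
  {β | (Monotone fun i : Fin n => ε i * β (σ i)) ∧
    (∀ i : Fin n, ε i * β (σ i) ≤ 0) ∧
    (∀ (p : ℕ) (hp : p + 1 < n), (∀ j, l j ≠ p + 1) →
      ε ⟨p, by omega⟩ * β (σ ⟨p, by omega⟩) = ε ⟨p + 1, hp⟩ * β (σ ⟨p + 1, hp⟩)) ∧
    (∀ (p : ℕ) (hp : p < n), (∀ j, l j ≤ p) → β (σ ⟨p, hp⟩) = 0)}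

/-- The linear subspace `L = {β ∈ ℝ^n : β_1 y_1 + ⋯ + β_n y_n = 0}`. -/
def Lspace (d n : ℕ) (y : Fin n → EuclideanSpace ℝ (Fin d)) :
    Submodule ℝ (EuclideanSpace ℝ (Fin n)) where
  carrier := {β | ∑ i, β i • y i = 0}
  add_mem' := by
    intro a b ha hb
    simp only [Set.mem_setOf_eq] at *
    have h : ∀ i ∈ Finset.univ, (a + b) i • y i = a i • y i + b i • y i := by
      intro i _
      rw [PiLp.add_apply, add_smul]
    rw [Finset.sum_congr rfl h, Finset.sum_add_distrib, ha, hb, add_zero]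
  zero_mem' := by
    simp only [Set.mem_setOf_eq]
    refine Finset.sum_eq_zero fun i _ => ?_
    rw [PiLp.zero_apply, zero_smul]
  smul_mem' := by
    intro c a ha
    simp only [Set.mem_setOf_eq] at *
    have h : ∀ i ∈ Finset.univ, (c • a) i • y i = c • (a i • y i) := by
      intro i _
      rw [PiLp.smul_apply, smul_smul, smul_eq_mul]
    rw [Finset.sum_congr rfl h, ← Finset.smul_sum, ha, smul_zero]

/-- The hyperplane `{β ∈ ℝ^N : β_i = β_j}`. -/
def hypEq (N : ℕ) (i j : Fin N) : Submodule ℝ (EuclideanSpace ℝ (Fin N)) where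
  carrier := {β | β i = β j}
  add_mem' := by
    intro a b ha hb
    simp only [Set.mem_setOf_eq, PiLp.add_apply] at *
    rw [ha, hb]
  zero_mem' := by simp [Set.mem_setOf_eq]
  smul_mem' := by
    intro c a ha
    simp only [Set.mem_setOf_eq, PiLp.smul_apply] at *
    rw [ha]

/-- The hyperplane `{β ∈ ℝ^N : β_i = -β_j}`. -/
def hypOpp (N : ℕ) (i j : Fin N) : Submodule ℝ (EuclideanSpace ℝ (Fin N)) where
  carrier := {β | β i = -β j}
  add_mem' := by
    intro a b ha hb
    simp only [Set.mem_setOf_eq, PiLp.add_apply] at *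
    rw [ha, hb, neg_add]
  zero_mem' := by simp [Set.mem_setOf_eq]
  smul_mem' := by
    intro c a ha
    simp only [Set.mem_setOf_eq, PiLp.smul_apply] at *
    rw [ha, smul_neg]

/-- The hyperplane `{β ∈ ℝ^N : β_i = 0}`. -/
def hypZero (N : ℕ) (i : Fin N) : Submodule ℝ (EuclideanSpace ℝ (Fin N)) where
  carrier := {β | β i = 0}
  add_mem' := by
    intro a b ha hb
    simp only [Set.mem_setOf_eq, PiLp.add_apply] at *
    rw [ha, hb, add_zero]
  zero_mem' := by simp [Set.mem_setOf_eq]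
  smul_mem' := by
    intro c a ha
    simp only [Set.mem_setOf_eq, PiLp.smul_apply] at *
    rw [ha, smul_zero]

/-- The reflection arrangement `𝒜(A_{N-1})` in `ℝ^N`. -/
def ArrA (N : ℕ) : Set (Submodule ℝ (EuclideanSpace ℝ (Fin N))) :=
  {H | ∃ i j : Fin N, i < j ∧ H = hypEq N i j}

/-- The reflection arrangement `𝒜(B_N)` in `ℝ^N`. -/
def ArrB (N : ℕ) : Set (Submodule ℝ (EuclideanSpace ℝ (Fin N))) :=
  {H | (∃ i j : Fin N, i < j ∧ H = hypEq N i j) ∨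
    (∃ i j : Fin N, i < j ∧ H = hypOpp N i j) ∨ ∃ i : Fin N, H = hypZero N i}

/-- Two linear subspaces `U`, `W` of `ℝ^N` are in general position if
`dim (U ∩ W) = max {0, dim U + dim W - N}`. -/
def InGenPos (N : ℕ) (U W : Submodule ℝ (EuclideanSpace ℝ (Fin N))) : Prop :=
  Module.finrank ℝ ↥(U ⊓ W) = Module.finrank ℝ ↥U + Module.finrank ℝ ↥W - N

/-- A linear subspace `U` is in general position with respect to a hyperplane
arrangement `A` if it is in general position with respect to `⋂_{H ∈ B} H` for
every subset `B ⊆ A`. -/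
def InGenPosArr (N : ℕ) (U : Submodule ℝ (EuclideanSpace ℝ (Fin N)))
    (A : Set (Submodule ℝ (EuclideanSpace ℝ (Fin N)))) : Prop :=
  ∀ B ⊆ A, InGenPos N U (sInf B)

/-- The polyhedral cone `{v : ⟨x_1,v⟩ ≤ 0, …, ⟨x_m,v⟩ ≤ 0}`. -/
def PolyCone (d m : ℕ) (x : Fin m → EuclideanSpace ℝ (Fin d)) :
    Set (EuclideanSpace ℝ (Fin d)) :=
  {v | ∀ i, ⟪x i, v⟫ ≤ 0}

/-- The dual cone `C° = {v : ⟨x,v⟩ ≤ 0 ∀ x ∈ C}`. -/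
def DualCone (d : ℕ) (C : Set (EuclideanSpace ℝ (Fin d))) :
    Set (EuclideanSpace ℝ (Fin d)) :=
  {v | ∀ w ∈ C, ⟪w, v⟫ ≤ 0}

/-- The face of `D^B_{ε,σ}` obtained by replacing the inequalities at the (0-indexed)
positions in `E` by equalities. -/
def SubfaceB (d n : ℕ) (y : Fin n → EuclideanSpace ℝ (Fin d)) (ε : Fin n → ℝ)
    (σ : Equiv.Perm (Fin n)) (E : Set (Fin n)) : Set (EuclideanSpace ℝ (Fin d)) :=
  {v | v ∈ ConeB d n y ε σ ∧ ∀ i ∈ E,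
    if h : (i : ℕ) + 1 < n then
      ε i * ⟪v, y (σ i)⟫ = ε ⟨(i : ℕ) + 1, h⟩ * ⟪v, y (σ ⟨(i : ℕ) + 1, h⟩)⟫
    else ε i * ⟪v, y (σ i)⟫ = 0}

end
section FarkasAux
variable {E : Type*} [NormedAddCommGroup E] [InnerProductSpace ℝ E]

theorem farkas_aux : ∀ (m : ℕ) (z : Fin m → E) (p : E),
    (∃ l : Fin m → ℝ, (∀ i, 0 ≤ l i) ∧ ∑ i, l i • z i = p) ∨
    (∃ v : E, (∀ j, ⟪z j, v⟫ ≤ 0) ∧ 0 < ⟪p, v⟫) := by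
  intro m
  induction m with
  | zero =>
    intro z p
    by_cases hp : p = 0
    · exact Or.inl ⟨0, fun i => le_refl 0, by simp [hp]⟩
    · exact Or.inr ⟨p, fun j => j.elim0, by rw [real_inner_self_eq_norm_mul_norm]; exact mul_pos (norm_pos_iff.2 hp) (norm_pos_iff.2 hp)⟩
  | succ m ih =>
    intro z p
    set z' : Fin m → E := fun j => z j.castSucc with hz'
    set a : E := z (Fin.last m) with ha'
    rcases ih z' p with ⟨l, hl, hsum⟩ | ⟨v, hv, hpv⟩
    · left
      refine ⟨Fin.snoc l 0, ?_, ?_⟩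
      · intro i
        induction i using Fin.lastCases with
        | last => simp
        | cast i => simpa using hl i
      · rw [Fin.sum_univ_castSucc]
        simpa using hsum
    · by_cases hav : ⟪a, v⟫ ≤ 0
      · right
        refine ⟨v, fun j => ?_, hpv⟩
        induction j using Fin.lastCases with
        | last => exact hav
        | cast j => exact hv j
      · push_neg at hav
        have hav0 : ⟪a, v⟫ ≠ 0 := ne_of_gt hav
        set w' : Fin m → E := fun j => z' j - (⟪z' j, v⟫ / ⟪a, v⟫) • a with hw'
        set p' : E := p - (⟪p, v⟫ / ⟪a, v⟫) • a with hp'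
        rcases ih w' p' with ⟨μ, hμ, hsum⟩ | ⟨w, hw, hpw⟩
        · left
          set t : ℝ := ⟪p, v⟫ / ⟪a, v⟫ - ∑ j, μ j * (⟪z' j, v⟫ / ⟪a, v⟫) with ht'
          have ht : 0 ≤ t := by
            have h1 : 0 < ⟪p, v⟫ / ⟪a, v⟫ := div_pos hpv hav
            have h2 : ∑ j, μ j * (⟪z' j, v⟫ / ⟪a, v⟫) ≤ 0 :=
              Finset.sum_nonpos fun j _ =>
                mul_nonpos_iff.2 (Or.inl ⟨hμ j, div_nonpos_iff.2 (Or.inr ⟨hv j, hav.le⟩)⟩)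
            rw [ht']
            linarith
          have expand : ∑ j, μ j • w' j =
              ∑ j, μ j • z' j - (∑ j, μ j * (⟪z' j, v⟫ / ⟪a, v⟫)) • a := by
            rw [Finset.sum_smul]
            rw [← Finset.sum_sub_distrib]
            refine Finset.sum_congr rfl fun j _ => ?_
            rw [hw']
            rw [smul_sub, smul_smul]
          have key : ∑ j, μ j • z' j - (∑ j, μ j * (⟪z' j, v⟫ / ⟪a, v⟫)) • a = p' := by
            rw [← expand]; exact hsum
          refine ⟨Fin.snoc μ t, ?_, ?_⟩
          · intro i
            induction i using Fin.lastCases with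
            | last => simpa using ht
            | cast i => simpa using hμ i
          · rw [Fin.sum_univ_castSucc]
            have : (Fin.snoc μ t : Fin (m+1) → ℝ) (Fin.last m) • z (Fin.last m) = t • a := by
              simp [ha']
            rw [this]
            have h2 : ∀ j : Fin m, (Fin.snoc μ t : Fin (m+1) → ℝ) j.castSucc • z j.castSucc
                = μ j • z' j := by intro j; simp [hz']
            rw [Finset.sum_congr rfl fun j _ => h2 j]
            rw [ht', sub_smul]
            rw [hp'] at key
            have := sub_eq_iff_eq_add.1 key
            rw [this]
            abel
        · right
          refine ⟨w - (⟪a, w⟫ / ⟪a, v⟫) • v, fun j => ?_, ?_⟩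
          · induction j using Fin.lastCases with
            | last =>
              rw [inner_sub_right, real_inner_smul_right]
              rw [show z (Fin.last m) = a from rfl]
              rw [div_mul_cancel₀ _ hav0]
              simp
            | cast j =>
              have hj := hw j
              rw [hw'] at hj
              rw [inner_sub_left, real_inner_smul_left] at hj
              rw [inner_sub_right, real_inner_smul_right]
              rw [show z j.castSucc = z' j from rfl]
              have e : ⟪a, w⟫ / ⟪a, v⟫ * ⟪z' j, v⟫ = ⟪z' j, v⟫ / ⟪a, v⟫ * ⟪a, w⟫ := by ring
              rw [e]
              exact hj
          · rw [hp'] at hpw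
            rw [inner_sub_left, real_inner_smul_left] at hpw
            rw [inner_sub_right, real_inner_smul_right]
            have e : ⟪a, w⟫ / ⟪a, v⟫ * ⟪p, v⟫ = ⟪p, v⟫ / ⟪a, v⟫ * ⟪a, w⟫ := by ring
            rw [e]
            exact hpw

end FarkasAux

section IntrinsicAux
variable {E : Type*} [NormedAddCommGroup E] [InnerProductSpace ℝ E]

/-- Moving from a relative interior point away from a point of the set stays in the set. -/
theorem exists_forward_of_mem_intrinsicInterior (K : Set E) {u w : E}
    (hu : u ∈ intrinsicInterior ℝ K) (hw : w ∈ K) :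
    ∃ t : ℝ, 0 < t ∧ u + t • (u - w) ∈ K := by
  obtain ⟨y, hy, hyu⟩ := hu
  rw [mem_interior_iff_mem_nhds, Metric.mem_nhds_iff] at hy
  obtain ⟨ε, hε, hball⟩ := hy
  set n : ℝ := ‖u - w‖ with hn
  have hn0 : 0 ≤ n := norm_nonneg _
  set t : ℝ := ε / (2 * (n + 1)) with ht'
  have ht : 0 < t := by positivity
  have huA : u ∈ affineSpan ℝ K := by rw [← hyu]; exact y.2
  have hwA : w ∈ affineSpan ℝ K := subset_affineSpan ℝ K hw
  have hqA : u + t • (u - w) ∈ affineSpan ℝ K := by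
    have := AffineSubspace.smul_vsub_vadd_mem (affineSpan ℝ K) t huA hwA huA
    simpa [vsub_eq_sub, vadd_eq_add, add_comm] using this
  have hmem : (⟨u + t • (u - w), hqA⟩ : affineSpan ℝ K) ∈ Metric.ball y ε := by
    rw [Metric.mem_ball, Subtype.dist_eq, hyu, dist_eq_norm]
    have : u + t • (u - w) - u = t • (u - w) := by abel
    rw [this, norm_smul, Real.norm_eq_abs, abs_of_pos ht, ← hn]
    have h2 : (0:ℝ) < 2 * (n + 1) := by positivity
    rw [ht', div_mul_eq_mul_div, div_lt_iff₀ h2]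
    nlinarith
  exact ⟨t, ht, hball hmem⟩

/-- A strictly positive combination of the generators lies in the relative interior. -/
theorem pos_combo_mem_intrinsicInterior [FiniteDimensional ℝ E] (m : ℕ) (x : Fin m → E) (K : Set E)
    (hK : ∀ l : Fin m → ℝ, (∀ i, 0 ≤ l i) → ∑ i, l i • x i ∈ K)
    (hKV : K ⊆ (Submodule.span ℝ (Set.range x) : Set E))
    (l : Fin m → ℝ) (hl : ∀ i, 0 < l i) :
    ∑ i, l i • x i ∈ intrinsicInterior ℝ K := by
  set V : Submodule ℝ E := Submodule.span ℝ (Set.range x) with hV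
  set u : E := ∑ i, l i • x i with hu
  have huK : u ∈ K := hK l fun i => (hl i).le
  have h0K : (0 : E) ∈ K := by simpa using hK 0 fun i => le_refl 0
  have hxK : ∀ i, x i ∈ K := by
    intro i
    have := hK (Pi.single i 1) (fun j => by
      rcases eq_or_ne i j with rfl | hij
      · simp
      · simp [Pi.single_apply, hij.symm])
    simpa [Pi.single_apply, ite_smul] using this
  have hspanK : Submodule.span ℝ K = V := by
    refine le_antisymm (Submodule.span_le.2 hKV) ?_
    rw [hV]
    exact Submodule.span_le.2 (Set.range_subset_iff.2 fun i => Submodule.subset_span (hxK i))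
  have hspanset : (affineSpan ℝ K : Set E) = (V : Set E) := by
    rw [← Set.insert_eq_self.2 h0K, affineSpan_insert_zero, hspanK]
  -- the linear map sending coefficients to combinations
  let T : (Fin m → ℝ) →ₗ[ℝ] E :=
    { toFun := fun c => ∑ i, c i • x i
      map_add' := by intro a b; simp [add_smul, Finset.sum_add_distrib]
      map_smul' := by intro c a; simp [smul_smul, Finset.smul_sum] }
  have hmemV : ∀ c, T c ∈ V := by
    intro c
    show ∑ i, c i • x i ∈ V
    exact Submodule.sum_mem _ fun i _ => Submodule.smul_mem _ _
      (Submodule.subset_span (Set.mem_range_self i))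
  let T2 : (Fin m → ℝ) →ₗ[ℝ] V := T.codRestrict V hmemV
  have hsurj : Function.Surjective T2 := by
    rintro ⟨v, hv⟩
    obtain ⟨c, hc⟩ := (Submodule.mem_span_range_iff_exists_fun ℝ).1 hv
    exact ⟨c, Subtype.ext hc⟩
  let T3 : (Fin m → ℝ) →L[ℝ] V := LinearMap.toContinuousLinearMap T2
  have hsurj3 : Function.Surjective T3 := hsurj
  have hopen : IsOpen (T3 '' Metric.ball 0 1) :=
    T3.isOpenMap hsurj3 _ Metric.isOpen_ball
  have h0mem : (0 : V) ∈ T3 '' Metric.ball 0 1 :=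
    ⟨0, by simp [Metric.mem_ball], by simp⟩
  obtain ⟨δ, hδ, hδsub⟩ := Metric.isOpen_iff.1 hopen 0 h0mem
  obtain ⟨ε₀, hε₀, hε₀le⟩ : ∃ e : ℝ, 0 < e ∧ ∀ i, e ≤ l i := by
    rcases isEmpty_or_nonempty (Fin m) with h | h
    · exact ⟨1, one_pos, fun i => isEmptyElim i⟩
    · refine ⟨Finset.univ.inf' Finset.univ_nonempty l, ?_, fun i => Finset.inf'_le _ (Finset.mem_univ i)⟩
      exact (Finset.lt_inf'_iff _).2 fun i _ => hl i
  have huA : u ∈ affineSpan ℝ K := subset_affineSpan ℝ K huK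
  refine ⟨⟨u, huA⟩, ?_, rfl⟩
  rw [mem_interior_iff_mem_nhds, Metric.mem_nhds_iff]
  refine ⟨δ * ε₀, by positivity, ?_⟩
  rintro ⟨q, hqA⟩ hq
  rw [Metric.mem_ball, Subtype.dist_eq, dist_eq_norm] at hq
  have hqV : q ∈ V := by
    have : q ∈ (affineSpan ℝ K : Set E) := hqA
    rwa [hspanset] at this
  have huV : u ∈ V := hKV huK
  have hdV : ε₀⁻¹ • (q - u) ∈ V := V.smul_mem _ (V.sub_mem hqV huV)
  have hdball : (⟨ε₀⁻¹ • (q - u), hdV⟩ : V) ∈ Metric.ball (0 : V) δ := by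
    rw [mem_ball_zero_iff]
    have : ‖(⟨ε₀⁻¹ • (q - u), hdV⟩ : V)‖ = ε₀⁻¹ * ‖q - u‖ := by
      rw [show ‖(⟨ε₀⁻¹ • (q - u), hdV⟩ : V)‖ = ‖ε₀⁻¹ • (q - u)‖ from rfl]
      rw [norm_smul, Real.norm_eq_abs, abs_of_pos (inv_pos.2 hε₀)]
    rw [this]
    calc ε₀⁻¹ * ‖q - u‖ < ε₀⁻¹ * (δ * ε₀) := by
          exact mul_lt_mul_of_pos_left hq (inv_pos.2 hε₀)
      _ = δ := by field_simp
  obtain ⟨c, hc1, hc2⟩ := hδsub hdball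
  have hcE : ∑ i, c i • x i = ε₀⁻¹ • (q - u) := congrArg Subtype.val hc2
  rw [mem_ball_zero_iff] at hc1
  have hnonneg : ∀ i, 0 ≤ l i + ε₀ * c i := by
    intro i
    have h1 : |c i| ≤ ‖c‖ := by
      have := norm_le_pi_norm c i
      simpa [Real.norm_eq_abs] using this
    have h2 : -1 < c i := by
      have := abs_lt.1 (lt_of_le_of_lt h1 hc1)
      exact this.1
    have := hε₀le i
    nlinarith
  have hkey : ∑ i, (l i + ε₀ * c i) • x i = q := by
    calc ∑ i, (l i + ε₀ * c i) • x i
        = ∑ i, l i • x i + ε₀ • ∑ i, c i • x i := by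
          rw [Finset.smul_sum, ← Finset.sum_add_distrib]
          exact Finset.sum_congr rfl fun i _ => by rw [add_smul, mul_smul]
      _ = u + ε₀ • (ε₀⁻¹ • (q - u)) := by rw [← hu, hcE]
      _ = q := by rw [smul_inv_smul₀ (ne_of_gt hε₀)]; abel
  have : q ∈ K := hkey ▸ hK _ hnonneg
  exact this

end IntrinsicAux

/-- Lemma 2.11: for a polyhedral cone `C` and a linear subspace `L`, `C ∩ L ⊄ linsp(C)` if
and only if `relint(C°) ∩ L^⊥ = ∅`. -/
theorem cone_meet_subspace_iff_relint_dual (d m : ℕ)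
    (x : Fin m → EuclideanSpace ℝ (Fin d))
    (L : Submodule ℝ (EuclideanSpace ℝ (Fin d))) :
    ¬(PolyCone d m x ∩ (L : Set (EuclideanSpace ℝ (Fin d))) ⊆
        PolyCone d m x ∩ (-PolyCone d m x)) ↔
      intrinsicInterior ℝ (DualCone d (PolyCone d m x)) ∩
        (Lᗮ : Set (EuclideanSpace ℝ (Fin d))) = ∅ := by
  classical
  set C : Set (EuclideanSpace ℝ (Fin d)) := PolyCone d m x with hC
  set K : Set (EuclideanSpace ℝ (Fin d)) := DualCone d C with hKdef
  set V : Submodule ℝ (EuclideanSpace ℝ (Fin d)) := Submodule.span ℝ (Set.range x) with hV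
  have hmemC : ∀ v, v ∈ C ↔ ∀ i, ⟪x i, v⟫ ≤ 0 := fun v => Iff.rfl
  have hmemK : ∀ u, u ∈ K ↔ ∀ w ∈ C, ⟪w, u⟫ ≤ 0 := fun u => Iff.rfl
  have hxK : ∀ i, x i ∈ K := by
    intro i
    rw [hmemK]
    intro w hw
    rw [real_inner_comm]
    exact (hmemC w).1 hw i
  have hcomb : ∀ l : Fin m → ℝ, (∀ i, 0 ≤ l i) → ∑ i, l i • x i ∈ K := by
    intro l hl
    rw [hmemK]
    intro w hw
    rw [inner_sum]
    refine Finset.sum_nonpos fun i _ => ?_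
    rw [real_inner_smul_right]
    refine mul_nonpos_iff.2 (Or.inl ⟨hl i, ?_⟩)
    rw [real_inner_comm]
    exact (hmemC w).1 hw i
  have hKV : K ⊆ (V : Set (EuclideanSpace ℝ (Fin d))) := by
    intro u hu
    have h2 : u ∈ Vᗮᗮ := by
      rw [Submodule.mem_orthogonal]
      intro w hw
      have hwx : ∀ i, ⟪w, x i⟫ = 0 := fun i =>
        (Submodule.mem_orthogonal' _ _).1 hw (x i)
          (Submodule.subset_span (Set.mem_range_self i))
      have hwC : w ∈ C := by
        rw [hmemC]; intro i; rw [real_inner_comm, hwx i]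
      have hwC' : -w ∈ C := by
        rw [hmemC]; intro i; rw [real_inner_comm, inner_neg_left, hwx i]; simp
      have h1 := (hmemK u).1 hu w hwC
      have h2 := (hmemK u).1 hu (-w) hwC'
      rw [inner_neg_left] at h2
      linarith
    rwa [Submodule.orthogonal_orthogonal] at h2
  constructor
  · intro hns
    obtain ⟨v, hvCL, hvlin⟩ := Set.not_subset.1 hns
    obtain ⟨hvC, hvL⟩ := hvCL
    have hvnegC : v ∉ -C := fun h => hvlin ⟨hvC, h⟩
    rw [Set.mem_neg, hmemC] at hvnegC
    obtain ⟨i₀, hi₀⟩ := not_forall.1 hvnegC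
    push_neg at hi₀
    rw [inner_neg_right] at hi₀
    have hi₀' : ⟪x i₀, v⟫ < 0 := by linarith
    rw [Set.eq_empty_iff_forall_notMem]
    rintro u ⟨huI, huLp⟩
    obtain ⟨t, ht, htK⟩ := exists_forward_of_mem_intrinsicInterior K huI (hxK i₀)
    have hvu : ⟪v, u⟫ = 0 := (Submodule.mem_orthogonal L u).1 huLp v hvL
    have h1 : ⟪v, u + t • (u - x i₀)⟫ ≤ 0 := (hmemK _).1 htK v hvC
    rw [inner_add_right, real_inner_smul_right, inner_sub_right, hvu] at h1
    have hvx : ⟪v, x i₀⟫ < 0 := by rw [real_inner_comm]; exact hi₀'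
    nlinarith [mul_pos ht (neg_pos.2 hvx)]
  · intro hempty hsub
    set z : Fin m → EuclideanSpace ℝ (Fin d) :=
      fun i => (L.orthogonalProjectionOnto (x i) : EuclideanSpace ℝ (Fin d)) with hz
    have hstiemke_hyp : ∀ v, (∀ i, ⟪z i, v⟫ ≤ 0) → ∀ i, ⟪z i, v⟫ = 0 := by
      intro v hv
      set v' : EuclideanSpace ℝ (Fin d) :=
        (L.orthogonalProjectionOnto v : EuclideanSpace ℝ (Fin d)) with hv'
      have heq : ∀ i, ⟪z i, v⟫ = ⟪x i, v'⟫ := fun i =>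
        Submodule.inner_starProjection_left_eq_right L (x i) v
      have hv'C : v' ∈ C := by
        rw [hmemC]; intro i; rw [← heq i]; exact hv i
      have hv'L : v' ∈ L := (L.orthogonalProjectionOnto v).2
      have hmem := hsub ⟨hv'C, hv'L⟩
      have hneg : -v' ∈ C := Set.mem_neg.1 hmem.2
      intro i
      have h1 : ⟪x i, v'⟫ ≤ 0 := (hmemC v').1 hv'C i
      have h2 := (hmemC _).1 hneg i
      rw [inner_neg_right] at h2
      rw [heq i]
      linarith
    have hstiemke : ∃ lam : Fin m → ℝ, (∀ i, 0 < lam i) ∧ ∑ i, lam i • z i = 0 := by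
      have hfk : ∀ i, ∃ l : Fin m → ℝ, (∀ j, 0 ≤ l j) ∧ ∑ j, l j • z j = -(z i) := by
        intro i
        rcases farkas_aux m z (-(z i)) with h | ⟨v, hv, hpv⟩
        · exact h
        · exfalso
          have h0 := hstiemke_hyp v hv i
          rw [inner_neg_left, h0] at hpv
          simpa using hpv
      choose l hl hlsum using hfk
      refine ⟨fun j => (∑ i, l i j) + 1, fun j => ?_, ?_⟩
      · have h0 : 0 ≤ ∑ i, l i j := Finset.sum_nonneg fun i _ => hl i j
        show 0 < (∑ i, l i j) + 1
        linarith
      · have e1 : ∑ j, ((∑ i, l i j) + 1) • z j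
            = ∑ j, (∑ i, l i j) • z j + ∑ j, z j := by
          rw [← Finset.sum_add_distrib]
          exact Finset.sum_congr rfl fun j _ => by rw [add_smul, one_smul]
        have e2 : ∑ j, (∑ i, l i j) • z j = ∑ i, ∑ j, l i j • z j := by
          rw [Finset.sum_comm]
          exact Finset.sum_congr rfl fun j _ => by rw [Finset.sum_smul]
        rw [e1, e2, Finset.sum_congr rfl fun i (_ : i ∈ Finset.univ) => hlsum i]
        simp
    obtain ⟨lam, hlam, hlamz⟩ := hstiemke
    set u : EuclideanSpace ℝ (Fin d) := ∑ i, lam i • x i with hu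
    have huI : u ∈ intrinsicInterior ℝ K :=
      pos_combo_mem_intrinsicInterior m x K hcomb hKV lam hlam
    have huLp : u ∈ Lᗮ := by
      have e : u = ∑ i, lam i • (x i - z i) := by
        rw [hu]
        rw [Finset.sum_congr rfl fun i (_ : i ∈ Finset.univ) =>
          smul_sub (lam i) (x i) (z i)]
        rw [Finset.sum_sub_distrib, hlamz, sub_zero]
      rw [e]
      exact Submodule.sum_mem _ fun i _ => Submodule.smul_mem _ _
        (Submodule.sub_starProjection_mem_orthogonal (K := L) (x i))
    rw [Set.eq_empty_iff_forall_notMem] at hempty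
    exact hempty u ⟨huI, huLp⟩
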